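/- In a finite switching state-space model, the filtering mode probability μ_t^m := P(M_t = m | Y_{1:t} = y_{1:t}) satisfies the recursion μ_t^m = (Σ_{n∈M} μ_{t-1}^n · π(n,m) · I_{nm}) / (Σ_{m'∈M} Σ_{n∈M} μ_{t-1}^n · π(n,m') · I_{nm'}), where I_{nm} := Σ_{x'∈S} Σ_{x∈S} g(y_t | x, m) · q(x | x', n, m) · P(X_{t-1} = x' | M_{t-1} = n, Y_{1:t-1} = y_{1:t-1}), provided the event {Y_{1:t} = y_{1:t}} has positive probability and for each n the event {M_{t-1} = n, Y_{1:t-1} = y_{1:t-1}} has positive probability. -/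

import Mathlib

open Finset

namespace SwitchingSSM

noncomputable section

/-- A trajectory of a switching state-space model over `T` steps: modes and hidden states
at times `0, 1, ..., T`, and observations at times `1, ..., T` (the observation at time
`i+1` is component `i`). -/
abbrev Traj (M S Y : Type) (T : ℕ) : Type :=
  (Fin (T + 1) → M) × (Fin (T + 1) → S) × (Fin T → Y)

variable {M S Y : Type} [Fintype M] [Fintype S] [Fintype Y]

/-- Joint probability of a complete trajectory of modes, states and observations:
`ρ(m₀) q₀(x₀ | m₀) ∏ₜ π(m₍ₜ₋₁₎, mₜ) q(xₜ | x₍ₜ₋₁₎, m₍ₜ₋₁₎, mₜ) g(yₜ | xₜ, mₜ)`,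
where `pim n m` is `π(n, m)`, `q0 m x` is `q₀(x | m)`, `q x' n m x` is `q(x | x', n, m)`
and `g x m y` is `g(y | x, m)`. -/
def joint (T : ℕ) (rho : M → ℝ) (pim : M → M → ℝ) (q0 : M → S → ℝ)
    (q : S → M → M → S → ℝ) (g : S → M → Y → ℝ) (ω : Traj M S Y T) : ℝ :=
  rho (ω.1 0) * q0 (ω.1 0) (ω.2.1 0) *
    ∏ i : Fin T,
      pim (ω.1 i.castSucc) (ω.1 i.succ) *
        q (ω.2.1 i.castSucc) (ω.1 i.castSucc) (ω.1 i.succ) (ω.2.1 i.succ) *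
          g (ω.2.1 i.succ) (ω.1 i.succ) (ω.2.2 i)

open Classical in
/-- Probability of an event `A` of trajectories. -/
def Pr (T : ℕ) (rho : M → ℝ) (pim : M → M → ℝ) (q0 : M → S → ℝ)
    (q : S → M → M → S → ℝ) (g : S → M → Y → ℝ) (A : Traj M S Y T → Prop) : ℝ :=
  ∑ ω : Traj M S Y T, if A ω then joint T rho pim q0 q g ω else 0

/-- Conditional probability `P(A | B)`. -/
def cPr (T : ℕ) (rho : M → ℝ) (pim : M → M → ℝ) (q0 : M → S → ℝ)
    (q : S → M → M → S → ℝ) (g : S → M → Y → ℝ) (A B : Traj M S Y T → Prop) : ℝ :=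
  Pr T rho pim q0 q g (fun ω => A ω ∧ B ω) / Pr T rho pim q0 q g B

/-! ### Auxiliary machinery -/

/-- Append one step to a trajectory. -/
def snocT {T : ℕ} (ω : Traj M S Y T) (m : M) (x : S) (y : Y) : Traj M S Y (T + 1) :=
  (Fin.snoc ω.1 m, Fin.snoc ω.2.1 x, Fin.snoc ω.2.2 y)

lemma snocT_1 {T : ℕ} (ω : Traj M S Y T) (m : M) (x : S) (y : Y) :
    (snocT ω m x y).1 = Fin.snoc ω.1 m := rfl

lemma snocT_21 {T : ℕ} (ω : Traj M S Y T) (m : M) (x : S) (y : Y) :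
    (snocT ω m x y).2.1 = Fin.snoc ω.2.1 x := rfl

lemma snocT_22 {T : ℕ} (ω : Traj M S Y T) (m : M) (x : S) (y : Y) :
    (snocT ω m x y).2.2 = Fin.snoc ω.2.2 y := rfl

/-- Equivalence between trajectories of length `T+1` and trajectories of length `T`
together with a last step. -/
def snocEquiv (T : ℕ) : Traj M S Y T × (M × S × Y) ≃ Traj M S Y (T + 1) where
  toFun p := snocT p.1 p.2.1 p.2.2.1 p.2.2.2
  invFun ω := ((Fin.init ω.1, Fin.init ω.2.1, Fin.init ω.2.2),
               ω.1 (Fin.last (T + 1)), ω.2.1 (Fin.last (T + 1)), ω.2.2 (Fin.last T))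
  left_inv p := by
    obtain ⟨⟨ms, xs, ys⟩, m, x, y⟩ := p
    simp [snocT, Fin.init_snoc]
  right_inv ω := by
    obtain ⟨ms, xs, ys⟩ := ω
    simp [snocT, Fin.snoc_init_self]

lemma sum_snoc {T : ℕ} (f : Traj M S Y (T + 1) → ℝ) :
    ∑ ω : Traj M S Y (T + 1), f ω
      = ∑ ω : Traj M S Y T, ∑ m : M, ∑ x : S, ∑ y : Y, f (snocT ω m x y) := by
  rw [← Fintype.sum_equiv (snocEquiv (M := M) (S := S) (Y := Y) T)
      (fun p => f (snocT p.1 p.2.1 p.2.2.1 p.2.2.2)) f (fun p => rfl)]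
  rw [Fintype.sum_prod_type]
  refine Finset.sum_congr rfl fun ω _ => ?_
  rw [Fintype.sum_prod_type]
  refine Finset.sum_congr rfl fun m _ => ?_
  rw [Fintype.sum_prod_type]

lemma snoc_zero' {n : ℕ} {α : Type} (p : Fin (n + 1) → α) (a : α) :
    (Fin.snoc p a : Fin (n + 2) → α) 0 = p 0 := by
  have h : (0 : Fin (n + 2)) = Fin.castSucc (0 : Fin (n + 1)) := by
    apply Fin.ext; simp
  rw [h, Fin.snoc_castSucc]

lemma joint_snoc {T : ℕ} (rho : M → ℝ) (pim : M → M → ℝ) (q0 : M → S → ℝ)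
    (q : S → M → M → S → ℝ) (g : S → M → Y → ℝ)
    (ω : Traj M S Y T) (m : M) (x : S) (y : Y) :
    joint (T + 1) rho pim q0 q g (snocT ω m x y)
      = joint T rho pim q0 q g ω *
          (pim (ω.1 (Fin.last T)) m *
            q (ω.2.1 (Fin.last T)) (ω.1 (Fin.last T)) m x * g x m y) := by
  obtain ⟨ms, xs, ys⟩ := ω
  unfold joint snocT
  dsimp only
  rw [Fin.prod_univ_castSucc]
  simp only [Fin.snoc_castSucc, Fin.succ_castSucc, Fin.succ_last, Fin.snoc_last, snoc_zero']
  ring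

/-- Truncation of a trajectory. -/
def trunc {T k : ℕ} (h : k ≤ T) (ω : Traj M S Y T) : Traj M S Y k :=
  (fun i => ω.1 (Fin.castLE (by omega) i),
   fun i => ω.2.1 (Fin.castLE (by omega) i),
   fun i => ω.2.2 (Fin.castLE h i))

lemma trunc_rfl {T : ℕ} (h : T ≤ T) (ω : Traj M S Y T) : trunc h ω = ω := by
  unfold trunc
  refine Prod.ext ?_ (Prod.ext ?_ ?_) <;>
    · funext i
      exact congrArg _ (Fin.ext rfl)

lemma trunc_snoc {T k : ℕ} (hk : k ≤ T) (h : k ≤ T + 1) (ω : Traj M S Y T)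
    (m : M) (x : S) (y : Y) :
    trunc h (snocT ω m x y) = trunc hk ω := by
  unfold trunc snocT
  refine Prod.ext ?_ (Prod.ext ?_ ?_) <;> funext i <;> dsimp only
  · rw [show (Fin.castLE (by omega : k + 1 ≤ T + 2) i)
        = Fin.castSucc (Fin.castLE (by omega : k + 1 ≤ T + 1) i) from Fin.ext rfl,
      Fin.snoc_castSucc]
  · rw [show (Fin.castLE (by omega : k + 1 ≤ T + 2) i)
        = Fin.castSucc (Fin.castLE (by omega : k + 1 ≤ T + 1) i) from Fin.ext rfl,
      Fin.snoc_castSucc]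
  · rw [show (Fin.castLE h i : Fin (T + 1))
        = Fin.castSucc (Fin.castLE hk i) from Fin.ext rfl,
      Fin.snoc_castSucc]

lemma Pr_congr {T : ℕ} (rho : M → ℝ) (pim : M → M → ℝ) (q0 : M → S → ℝ)
    (q : S → M → M → S → ℝ) (g : S → M → Y → ℝ)
    {E E' : Traj M S Y T → Prop} (h : ∀ ω, E ω ↔ E' ω) :
    Pr T rho pim q0 q g E = Pr T rho pim q0 q g E' := by
  classical
  unfold Pr
  exact Finset.sum_congr rfl fun ω _ => if_congr (h ω) rfl rfl

open Classical in
lemma Pr_trunc (rho : M → ℝ) (pim : M → M → ℝ) (q0 : M → S → ℝ)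
    (q : S → M → M → S → ℝ) (g : S → M → Y → ℝ)
    (hpim1 : ∀ a : M, (∑ b : M, pim a b) = 1)
    (hq1 : ∀ (x' : S) (a b : M), (∑ x : S, q x' a b x) = 1)
    (hg1 : ∀ (x : S) (a : M), (∑ y : Y, g x a y) = 1) :
    ∀ (T k : ℕ) (h : k ≤ T) (P : Traj M S Y k → Prop),
      Pr T rho pim q0 q g (fun ω => P (trunc h ω)) = Pr k rho pim q0 q g P := by
  intro T
  induction T with
  | zero =>
      intro k h P
      have hk0 : k = 0 := Nat.le_zero.mp h
      subst hk0
      exact congrArg _ (funext fun ω => congrArg P (trunc_rfl h ω))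
  | succ T ih =>
      intro k h P
      by_cases hkT : k = T + 1
      · subst hkT
        exact congrArg _ (funext fun ω => congrArg P (trunc_rfl h ω))
      · have hk' : k ≤ T := by omega
        have peel : Pr (T + 1) rho pim q0 q g (fun ω => P (trunc h ω))
            = Pr T rho pim q0 q g (fun ω => P (trunc hk' ω)) := by
          unfold Pr
          rw [sum_snoc]
          calc (∑ ω : Traj M S Y T, ∑ mv : M, ∑ xv : S, ∑ yv : Y,
                  if P (trunc h (snocT ω mv xv yv)) then
                    joint (T + 1) rho pim q0 q g (snocT ω mv xv yv) else 0)
              = ∑ ω : Traj M S Y T,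
                  (if P (trunc hk' ω) then joint T rho pim q0 q g ω else 0) *
                    (∑ mv : M, ∑ xv : S, ∑ yv : Y,
                      pim (ω.1 (Fin.last T)) mv *
                        q (ω.2.1 (Fin.last T)) (ω.1 (Fin.last T)) mv xv * g xv mv yv) := by
                refine Finset.sum_congr rfl fun ω _ => ?_
                rw [Finset.mul_sum]
                refine Finset.sum_congr rfl fun mv _ => ?_
                rw [Finset.mul_sum]
                refine Finset.sum_congr rfl fun xv _ => ?_
                rw [Finset.mul_sum]
                refine Finset.sum_congr rfl fun yv _ => ?_
                rw [trunc_snoc hk' h ω mv xv yv, joint_snoc]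
                by_cases hP : P (trunc hk' ω)
                · rw [if_pos hP, if_pos hP]
                · rw [if_neg hP, if_neg hP, zero_mul]
            _ = ∑ ω : Traj M S Y T,
                  (if P (trunc hk' ω) then joint T rho pim q0 q g ω else 0) := by
                refine Finset.sum_congr rfl fun ω _ => ?_
                have h2 : ∀ (mv : M) (xv : S),
                    (∑ yv : Y, pim (ω.1 (Fin.last T)) mv *
                      q (ω.2.1 (Fin.last T)) (ω.1 (Fin.last T)) mv xv * g xv mv yv)
                      = pim (ω.1 (Fin.last T)) mv *
                          q (ω.2.1 (Fin.last T)) (ω.1 (Fin.last T)) mv xv := by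
                  intro mv xv; rw [← Finset.mul_sum, hg1, mul_one]
                have h3 : ∀ mv : M,
                    (∑ xv : S, pim (ω.1 (Fin.last T)) mv *
                      q (ω.2.1 (Fin.last T)) (ω.1 (Fin.last T)) mv xv)
                      = pim (ω.1 (Fin.last T)) mv := by
                  intro mv; rw [← Finset.mul_sum, hq1, mul_one]
                have h1 : (∑ mv : M, ∑ xv : S, ∑ yv : Y,
                    pim (ω.1 (Fin.last T)) mv *
                      q (ω.2.1 (Fin.last T)) (ω.1 (Fin.last T)) mv xv * g xv mv yv) = 1 := by
                  simp only [h2, h3]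
                  exact hpim1 _
                rw [h1, mul_one]
        rw [peel]
        exact ih k hk' P

open Classical in
lemma Pr_partition {T : ℕ} (rho : M → ℝ) (pim : M → M → ℝ) (q0 : M → S → ℝ)
    (q : S → M → M → S → ℝ) (g : S → M → Y → ℝ)
    {α : Type} [Fintype α] (f : Traj M S Y T → α) (E : Traj M S Y T → Prop) :
    Pr T rho pim q0 q g E = ∑ v : α, Pr T rho pim q0 q g (fun ω => f ω = v ∧ E ω) := by
  unfold Pr
  rw [Finset.sum_comm]
  refine Finset.sum_congr rfl fun ω _ => ?_
  by_cases hE : E ω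
  · rw [if_pos hE]
    symm
    refine (Finset.sum_eq_single_of_mem (f ω) (Finset.mem_univ _) ?_).trans ?_
    · intro v _ hv
      rw [if_neg]
      rintro ⟨h1, -⟩
      exact hv h1.symm
    · rw [if_pos ⟨rfl, hE⟩]
  · rw [if_neg hE]
    symm
    refine Finset.sum_eq_zero fun v _ => ?_
    rw [if_neg]
    rintro ⟨-, h2⟩
    exact hE h2

lemma sum_rot3 {α β γ : Type*} [Fintype α] [Fintype β] [Fintype γ]
    (f : α → β → γ → ℝ) :
    ∑ a : α, ∑ b : β, ∑ c : γ, f a b c = ∑ b : β, ∑ c : γ, ∑ a : α, f a b c := by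
  rw [Finset.sum_comm]
  exact Finset.sum_congr rfl fun b _ => Finset.sum_comm

open Classical in
/-- One-step decomposition of the filtered joint probability. -/
lemma Pr_step {T : ℕ} (rho : M → ℝ) (pim : M → M → ℝ) (q0 : M → S → ℝ)
    (q : S → M → M → S → ℝ) (g : S → M → Y → ℝ) (ys : Fin (T + 1) → Y) (m : M) :
    Pr (T + 1) rho pim q0 q g
        (fun ω => ω.1 (Fin.last (T + 1)) = m ∧ ∀ i : Fin (T + 1), ω.2.2 i = ys i)
      = ∑ n : M, ∑ x' : S,
          Pr T rho pim q0 q g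
              (fun ω => ω.1 (Fin.last T) = n ∧ ω.2.1 (Fin.last T) = x' ∧
                ∀ i : Fin T, ω.2.2 i = ys i.castSucc) *
            (pim n m * ∑ x : S, q x' n m x * g x m (ys (Fin.last T))) := by
  classical
  have hforall : ∀ (ys' : Fin T → Y) (y : Y),
      (∀ i : Fin (T + 1), (Fin.snoc ys' y : Fin (T + 1) → Y) i = ys i) ↔
        ((∀ i : Fin T, ys' i = ys i.castSucc) ∧ y = ys (Fin.last T)) := by
    intro ys' y
    constructor
    · intro H
      refine ⟨fun i => ?_, ?_⟩
      · have := H i.castSucc; rwa [Fin.snoc_castSucc] at this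
      · have := H (Fin.last T); rwa [Fin.snoc_last] at this
    · rintro ⟨H1, H2⟩ i
      refine Fin.lastCases ?_ ?_ i
      · rwa [Fin.snoc_last]
      · intro j; rw [Fin.snoc_castSucc]; exact H1 j
  have key : ∀ ω : Traj M S Y T,
      (∑ mv : M, ∑ xv : S, ∑ yv : Y,
          @ite ℝ ((Fin.snoc ω.1 mv : Fin (T + 2) → M) (Fin.last (T + 1)) = m ∧
              (∀ i : Fin (T + 1), (Fin.snoc ω.2.2 yv : Fin (T + 1) → Y) i = ys i))
            (Classical.propDecidable _)
            (joint (T + 1) rho pim q0 q g (snocT ω mv xv yv)) 0)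
        = ∑ n : M, ∑ x' : S,
            @ite ℝ (ω.1 (Fin.last T) = n ∧ ω.2.1 (Fin.last T) = x' ∧
                (∀ i : Fin T, ω.2.2 i = ys i.castSucc))
              (Classical.propDecidable _)
              (joint T rho pim q0 q g ω *
                (pim n m * ∑ x : S, q x' n m x * g x m (ys (Fin.last T)))) 0 := by
    intro ω
    by_cases hC : ∀ i : Fin T, ω.2.2 i = ys i.castSucc
    · have hRHS : (∑ n : M, ∑ x' : S,
          @ite ℝ (ω.1 (Fin.last T) = n ∧ ω.2.1 (Fin.last T) = x' ∧
              (∀ i : Fin T, ω.2.2 i = ys i.castSucc))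
            (Classical.propDecidable _)
            (joint T rho pim q0 q g ω *
              (pim n m * ∑ x : S, q x' n m x * g x m (ys (Fin.last T)))) 0)
          = joint T rho pim q0 q g ω *
              (pim (ω.1 (Fin.last T)) m *
                ∑ x : S, q (ω.2.1 (Fin.last T)) (ω.1 (Fin.last T)) m x *
                  g x m (ys (Fin.last T))) := by
        refine (Finset.sum_eq_single_of_mem (ω.1 (Fin.last T)) (Finset.mem_univ _) ?_).trans ?_
        · intro n _ hn
          refine Finset.sum_eq_zero fun x' _ => ?_
          rw [if_neg]
          rintro ⟨h1, -, -⟩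
          exact hn h1.symm
        · refine (Finset.sum_eq_single_of_mem (ω.2.1 (Fin.last T)) (Finset.mem_univ _) ?_).trans ?_
          · intro x' _ hx'
            rw [if_neg]
            rintro ⟨-, h2, -⟩
            exact hx' h2.symm
          · rw [if_pos ⟨rfl, rfl, hC⟩]
      rw [hRHS]
      refine (Finset.sum_eq_single_of_mem m (Finset.mem_univ m) ?_).trans ?_
      · intro mv _ hmv
        refine Finset.sum_eq_zero fun xv _ => Finset.sum_eq_zero fun yv _ => ?_
        rw [if_neg]
        rintro ⟨h1, -⟩
        rw [Fin.snoc_last] at h1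
        exact hmv h1
      · rw [Finset.sum_comm]
        refine (Finset.sum_eq_single_of_mem (ys (Fin.last T)) (Finset.mem_univ _) ?_).trans ?_
        · intro yv _ hyv
          refine Finset.sum_eq_zero fun xv _ => ?_
          rw [if_neg]
          rintro ⟨-, h2⟩
          exact hyv ((hforall _ _).mp h2).2
        · have hcond : ((Fin.snoc ω.1 m : Fin (T + 2) → M) (Fin.last (T + 1)) = m ∧
              (∀ i : Fin (T + 1),
                (Fin.snoc ω.2.2 (ys (Fin.last T)) : Fin (T + 1) → Y) i = ys i)) :=
            ⟨Fin.snoc_last _ _, (hforall _ _).mpr ⟨hC, rfl⟩⟩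
          calc (∑ xv : S,
                  @ite ℝ ((Fin.snoc ω.1 m : Fin (T + 2) → M) (Fin.last (T + 1)) = m ∧
                      (∀ i : Fin (T + 1),
                        (Fin.snoc ω.2.2 (ys (Fin.last T)) : Fin (T + 1) → Y) i = ys i))
                    (Classical.propDecidable _)
                    (joint (T + 1) rho pim q0 q g (snocT ω m xv (ys (Fin.last T)))) 0)
              = ∑ xv : S, joint T rho pim q0 q g ω *
                  (pim (ω.1 (Fin.last T)) m *
                    q (ω.2.1 (Fin.last T)) (ω.1 (Fin.last T)) m xv *
                      g xv m (ys (Fin.last T))) := by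
                refine Finset.sum_congr rfl fun xv _ => ?_
                rw [if_pos hcond, joint_snoc]
            _ = joint T rho pim q0 q g ω *
                  (pim (ω.1 (Fin.last T)) m *
                    ∑ x : S, q (ω.2.1 (Fin.last T)) (ω.1 (Fin.last T)) m x *
                      g x m (ys (Fin.last T))) := by
                rw [← Finset.mul_sum]
                refine congrArg₂ (· * ·) rfl ?_
                rw [Finset.mul_sum]
                exact Finset.sum_congr rfl fun x _ => by ring
    · refine Eq.trans (Finset.sum_eq_zero fun mv _ => Finset.sum_eq_zero fun xv _ =>
        Finset.sum_eq_zero fun yv _ => ?_) (Eq.symm (Finset.sum_eq_zero fun n _ =>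
          Finset.sum_eq_zero fun x' _ => ?_))
      · rw [if_neg]
        rintro ⟨-, h2⟩
        exact hC ((hforall _ _).mp h2).1
      · rw [if_neg]
        rintro ⟨-, -, h3⟩
        exact hC h3
  unfold Pr
  rw [sum_snoc]
  refine Eq.trans (Finset.sum_congr rfl fun ω _ => key ω) ?_
  rw [sum_rot3]
  refine Finset.sum_congr rfl fun n _ => Finset.sum_congr rfl fun x' _ => ?_
  rw [Finset.sum_mul]
  exact Finset.sum_congr rfl fun ω _ => by rw [ite_mul, zero_mul]

/-- The final pure-algebra step. -/
lemma final_algebra (N : M → ℝ) (A : M → S → ℝ) (pim : M → M → ℝ)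
    (r : S → M → M → S → ℝ) (m : M)
    (hcore : ∀ m', N m' = ∑ n : M, ∑ x' : S, A n x' * (pim n m' * ∑ x : S, r x' n m' x))
    (hSA : ∀ n, 0 < ∑ x' : S, A n x')
    (hP0 : 0 < ∑ n : M, ∑ x' : S, A n x') :
    N m / (∑ m' : M, N m') =
      (∑ n : M, (∑ x' : S, A n x') / (∑ n' : M, ∑ x' : S, A n' x') * pim n m *
          (∑ x' : S, ∑ x : S, r x' n m x * (A n x' / (∑ x'' : S, A n x'')))) /
      (∑ m' : M, ∑ n : M, (∑ x' : S, A n x') / (∑ n' : M, ∑ x' : S, A n' x') * pim n m' *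
          (∑ x' : S, ∑ x : S, r x' n m' x * (A n x' / (∑ x'' : S, A n x'')))) := by
  have hkey : ∀ m' : M,
      (∑ n : M, (∑ x' : S, A n x') / (∑ n' : M, ∑ x' : S, A n' x') * pim n m' *
          (∑ x' : S, ∑ x : S, r x' n m' x * (A n x' / (∑ x'' : S, A n x''))))
        = N m' / (∑ n' : M, ∑ x' : S, A n' x') := by
    intro m'
    rw [hcore m', Finset.sum_div]
    refine Finset.sum_congr rfl fun n _ => ?_
    have hI : (∑ x' : S, ∑ x : S, r x' n m' x * (A n x' / (∑ x'' : S, A n x'')))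
        = (∑ x' : S, A n x' * ∑ x : S, r x' n m' x) / (∑ x'' : S, A n x'') := by
      rw [Finset.sum_div]
      refine Finset.sum_congr rfl fun x' _ => ?_
      rw [← Finset.sum_mul, mul_comm, div_mul_eq_mul_div]
    have hA2 : (∑ x' : S, A n x' * (pim n m' * ∑ x : S, r x' n m' x))
        = pim n m' * ∑ x' : S, A n x' * ∑ x : S, r x' n m' x := by
      rw [Finset.mul_sum]
      exact Finset.sum_congr rfl fun x' _ => by ring
    rw [hI, hA2]
    have hSAne : (∑ x' : S, A n x') ≠ 0 := (hSA n).ne'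
    have hP0ne : (∑ n' : M, ∑ x' : S, A n' x') ≠ 0 := hP0.ne'
    field_simp
  rw [hkey m]
  rw [show (∑ m' : M, ∑ n : M, (∑ x' : S, A n x') / (∑ n' : M, ∑ x' : S, A n' x') * pim n m' *
          (∑ x' : S, ∑ x : S, r x' n m' x * (A n x' / (∑ x'' : S, A n x''))))
      = (∑ m' : M, N m') / (∑ n' : M, ∑ x' : S, A n' x') from
    (Finset.sum_congr rfl fun m' _ => hkey m').trans (Finset.sum_div _ _ _).symm]
  rw [div_div_eq_mul_div, div_mul_cancel₀ _ hP0.ne']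

/-- Recursion for the filtering mode probabilities of a finite switching state-space model:
`μₜᵐ = (∑ₙ μ₍ₜ₋₁₎ⁿ π(n,m) Iₙₘ) / (∑_{m'} ∑ₙ μ₍ₜ₋₁₎ⁿ π(n,m') Iₙₘ')` where
`Iₙₘ = ∑_{x'} ∑_x g(yₜ | x, m) q(x | x', n, m) P(X₍ₜ₋₁₎ = x' | M₍ₜ₋₁₎ = n, Y_{1:t-1} = y_{1:t-1})`,
provided `{Y_{1:t} = y_{1:t}}` and each `{M₍ₜ₋₁₎ = n, Y_{1:t-1} = y_{1:t-1}}` have positive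
probability.  Here `yobs i` denotes the observation `y_{i+1}`. -/
theorem filtering_mode_probability_recursion
    (T : ℕ) (rho : M → ℝ) (pim : M → M → ℝ) (q0 : M → S → ℝ)
    (q : S → M → M → S → ℝ) (g : S → M → Y → ℝ)
    (hrho0 : ∀ a, 0 ≤ rho a) (hrho1 : (∑ a : M, rho a) = 1)
    (hpim0 : ∀ a b, 0 ≤ pim a b) (hpim1 : ∀ a : M, (∑ b : M, pim a b) = 1)
    (hq00 : ∀ a x, 0 ≤ q0 a x) (hq01 : ∀ a : M, (∑ x : S, q0 a x) = 1)
    (hq0 : ∀ x' a b x, 0 ≤ q x' a b x) (hq1 : ∀ (x' : S) (a b : M), (∑ x : S, q x' a b x) = 1)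
    (hg0 : ∀ x a y, 0 ≤ g x a y) (hg1 : ∀ (x : S) (a : M), (∑ y : Y, g x a y) = 1)
    (yobs : Fin T → Y) (t : ℕ) (ht1 : 1 ≤ t) (ht2 : t ≤ T) (m : M)
    (hpos : 0 < Pr T rho pim q0 q g
      (fun ω => ∀ i : Fin T, (i : ℕ) < t → ω.2.2 i = yobs i))
    (hpos' : ∀ n : M, 0 < Pr T rho pim q0 q g
      (fun ω => ω.1 ⟨t - 1, by omega⟩ = n ∧
        ∀ i : Fin T, (i : ℕ) < t - 1 → ω.2.2 i = yobs i)) :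
    cPr T rho pim q0 q g (fun ω => ω.1 ⟨t, by omega⟩ = m)
        (fun ω => ∀ i : Fin T, (i : ℕ) < t → ω.2.2 i = yobs i) =
      (∑ n : M,
          cPr T rho pim q0 q g (fun ω => ω.1 ⟨t - 1, by omega⟩ = n)
              (fun ω => ∀ i : Fin T, (i : ℕ) < t - 1 → ω.2.2 i = yobs i) *
            pim n m *
            (∑ x' : S, ∑ x : S,
              g x m (yobs ⟨t - 1, by omega⟩) * q x' n m x *
                cPr T rho pim q0 q g (fun ω => ω.2.1 ⟨t - 1, by omega⟩ = x')
                  (fun ω => ω.1 ⟨t - 1, by omega⟩ = n ∧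
                    ∀ i : Fin T, (i : ℕ) < t - 1 → ω.2.2 i = yobs i))) /
      (∑ m' : M, ∑ n : M,
          cPr T rho pim q0 q g (fun ω => ω.1 ⟨t - 1, by omega⟩ = n)
              (fun ω => ∀ i : Fin T, (i : ℕ) < t - 1 → ω.2.2 i = yobs i) *
            pim n m' *
            (∑ x' : S, ∑ x : S,
              g x m' (yobs ⟨t - 1, by omega⟩) * q x' n m' x *
                cPr T rho pim q0 q g (fun ω => ω.2.1 ⟨t - 1, by omega⟩ = x')
                  (fun ω => ω.1 ⟨t - 1, by omega⟩ = n ∧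
                    ∀ i : Fin T, (i : ℕ) < t - 1 → ω.2.2 i = yobs i))) := by
  classical
  obtain ⟨s, rfl⟩ : ∃ s, t = s + 1 := ⟨t - 1, (Nat.succ_pred_eq_of_pos ht1).symm⟩
  simp only [Nat.add_sub_cancel] at hpos' ⊢
  have hs1T : s + 1 ≤ T := ht2
  have hsT : s ≤ T := by omega
  have hfin1 : s + 1 < T + 1 := by omega
  have hfins : s < T + 1 := by omega
  have hsltT : s < T := by omega
  -- correspondence for the time-`t` mode probability
  have hN : ∀ m' : M,
      Pr T rho pim q0 q g (fun ω => ω.1 ⟨s + 1, hfin1⟩ = m' ∧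
          ∀ i : Fin T, (i : ℕ) < s + 1 → ω.2.2 i = yobs i)
        = Pr (s + 1) rho pim q0 q g (fun σ => σ.1 (Fin.last (s + 1)) = m' ∧
            ∀ j : Fin (s + 1), σ.2.2 j = yobs (Fin.castLE hs1T j)) := by
    intro m'
    refine (Pr_congr rho pim q0 q g ?_).trans
      (Pr_trunc rho pim q0 q g hpim1 hq1 hg1 T (s + 1) hs1T _)
    intro ω
    constructor
    · rintro ⟨h1, h2⟩
      exact ⟨h1, fun j => h2 (Fin.castLE hs1T j) j.isLt⟩
    · rintro ⟨h1, h2⟩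
      exact ⟨h1, fun i hi => h2 ⟨(i : ℕ), hi⟩⟩
  have hA : ∀ (n : M) (x' : S),
      Pr T rho pim q0 q g (fun ω => ω.2.1 ⟨s, hfins⟩ = x' ∧ (ω.1 ⟨s, hfins⟩ = n ∧
          ∀ i : Fin T, (i : ℕ) < s → ω.2.2 i = yobs i))
        = Pr s rho pim q0 q g (fun σ => σ.1 (Fin.last s) = n ∧ σ.2.1 (Fin.last s) = x' ∧
            ∀ j : Fin s, σ.2.2 j = yobs (Fin.castLE hs1T j.castSucc)) := by
    intro n x'
    refine (Pr_congr rho pim q0 q g ?_).trans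
      (Pr_trunc rho pim q0 q g hpim1 hq1 hg1 T s hsT _)
    intro ω
    constructor
    · rintro ⟨h1, h2, h3⟩
      exact ⟨h2, h1, fun j => h3 (Fin.castLE hsT j) j.isLt⟩
    · rintro ⟨h1, h2, h3⟩
      exact ⟨h2, h1, fun i hi => h3 ⟨(i : ℕ), hi⟩⟩
  have hB : ∀ n : M,
      Pr T rho pim q0 q g (fun ω => ω.1 ⟨s, hfins⟩ = n ∧
          ∀ i : Fin T, (i : ℕ) < s → ω.2.2 i = yobs i)
        = ∑ x' : S, Pr s rho pim q0 q g (fun σ => σ.1 (Fin.last s) = n ∧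
            σ.2.1 (Fin.last s) = x' ∧
            ∀ j : Fin s, σ.2.2 j = yobs (Fin.castLE hs1T j.castSucc)) := by
    intro n
    rw [Pr_partition rho pim q0 q g (fun ω => ω.2.1 ⟨s, hfins⟩) _]
    exact Finset.sum_congr rfl fun x' _ => hA n x'
  have hC1 : Pr T rho pim q0 q g
        (fun ω => ∀ i : Fin T, (i : ℕ) < s + 1 → ω.2.2 i = yobs i)
      = ∑ m' : M, Pr (s + 1) rho pim q0 q g (fun σ => σ.1 (Fin.last (s + 1)) = m' ∧
          ∀ j : Fin (s + 1), σ.2.2 j = yobs (Fin.castLE hs1T j)) := by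
    rw [Pr_partition rho pim q0 q g (fun ω => ω.1 ⟨s + 1, hfin1⟩) _]
    exact Finset.sum_congr rfl fun m' _ => hN m'
  have hC0 : Pr T rho pim q0 q g
        (fun ω => ∀ i : Fin T, (i : ℕ) < s → ω.2.2 i = yobs i)
      = ∑ n : M, ∑ x' : S, Pr s rho pim q0 q g (fun σ => σ.1 (Fin.last s) = n ∧
          σ.2.1 (Fin.last s) = x' ∧
          ∀ j : Fin s, σ.2.2 j = yobs (Fin.castLE hs1T j.castSucc)) := by
    rw [Pr_partition rho pim q0 q g (fun ω => ω.1 ⟨s, hfins⟩) _]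
    exact Finset.sum_congr rfl fun n _ => hB n
  have hSA : ∀ n : M, 0 < ∑ x' : S, Pr s rho pim q0 q g
      (fun σ => σ.1 (Fin.last s) = n ∧ σ.2.1 (Fin.last s) = x' ∧
        ∀ j : Fin s, σ.2.2 j = yobs (Fin.castLE hs1T j.castSucc)) := by
    intro n
    have h := hpos' n
    rwa [hB n] at h
  have hMne : Nonempty M := by
    by_contra hc
    rw [not_nonempty_iff] at hc
    rw [Finset.univ_eq_empty, Finset.sum_empty] at hrho1
    exact one_ne_zero hrho1.symm
  have hP0 : 0 < ∑ n : M, ∑ x' : S, Pr s rho pim q0 q g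
      (fun σ => σ.1 (Fin.last s) = n ∧ σ.2.1 (Fin.last s) = x' ∧
        ∀ j : Fin s, σ.2.2 j = yobs (Fin.castLE hs1T j.castSucc)) :=
    Finset.sum_pos (fun n _ => hSA n) Finset.univ_nonempty
  have hcore : ∀ m' : M,
      Pr (s + 1) rho pim q0 q g (fun σ => σ.1 (Fin.last (s + 1)) = m' ∧
          ∀ j : Fin (s + 1), σ.2.2 j = yobs (Fin.castLE hs1T j))
        = ∑ n : M, ∑ x' : S,
            Pr s rho pim q0 q g (fun σ => σ.1 (Fin.last s) = n ∧
                σ.2.1 (Fin.last s) = x' ∧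
                ∀ j : Fin s, σ.2.2 j = yobs (Fin.castLE hs1T j.castSucc)) *
              (pim n m' * ∑ x : S, g x m' (yobs ⟨s, hsltT⟩) * q x' n m' x) := by
    intro m'
    rw [Pr_step rho pim q0 q g (fun j : Fin (s + 1) => yobs (Fin.castLE hs1T j)) m']
    refine Finset.sum_congr rfl fun n _ => Finset.sum_congr rfl fun x' _ => ?_
    exact congrArg₂ (· * ·) rfl
      (congrArg₂ (· * ·) rfl (Finset.sum_congr rfl fun x _ => mul_comm _ _))
  simp only [cPr, hN, hC1, hB, hC0, hA]
  exact final_algebra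
    (fun m' => Pr (s + 1) rho pim q0 q g (fun σ => σ.1 (Fin.last (s + 1)) = m' ∧
      ∀ j : Fin (s + 1), σ.2.2 j = yobs (Fin.castLE hs1T j)))
    (fun n x' => Pr s rho pim q0 q g (fun σ => σ.1 (Fin.last s) = n ∧
      σ.2.1 (Fin.last s) = x' ∧
      ∀ j : Fin s, σ.2.2 j = yobs (Fin.castLE hs1T j.castSucc)))
    pim
    (fun x' n m' x => g x m' (yobs ⟨s, hsltT⟩) * q x' n m' x)
    m hcore hSA hP0

end
end SwitchingSSM
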